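/- Let n > 2 be an odd natural number. Then there exists a nonzero multivariate polynomial p in n complex variables such that for every v ∈ ℂ^n with p(v) ≠ 0, the family of 2n vectors {T^a v : a ∈ ℤ_n} ∪ {T^a D v : a ∈ ℤ_n} is a full spark frame (every subfamily of n of these vectors is linearly independent). In particular, the set of such v contains a nonempty Zariski open subset of ℂ^n. -/

import Mathlib

/-- The `n × n` cyclic shift matrix `T`, acting by `(T v) j = v ((j - 1) mod n)`. -/
def shiftMat (n : ℕ) : Matrix (Fin n) (Fin n) ℂ :=
  Matrix.of fun j k => if ((k : ℕ) + 1) % n = (j : ℕ) then 1 else 0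

/-- The `n × n` reversal matrix `D`, acting by `(D v) j = v ((n - j) mod n)`. -/
def revMat (n : ℕ) : Matrix (Fin n) (Fin n) ℂ :=
  Matrix.of fun j k => if ((j : ℕ) + (k : ℕ)) % n = 0 then 1 else 0

/-- The family of `2n` vectors `{T^a v} ∪ {T^a D v}`, the `D₂ₙ`-orbit of `v`. -/
noncomputable def dihedralOrbit (n : ℕ) (v : Fin n → ℂ) :
    Fin 2 × Fin n → Fin n → ℂ :=
  fun p => ((shiftMat n) ^ (p.2 : ℕ)).mulVec (if p.1 = 0 then v else (revMat n).mulVec v)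

/-- A family of `2n` vectors in `ℂⁿ` is a full spark frame (has the Haar property)
if every subfamily of `n` of the vectors is linearly independent. -/
def IsFullSpark (n : ℕ) (f : Fin 2 × Fin n → Fin n → ℂ) : Prop :=
  ∀ S : Finset (Fin 2 × Fin n), S.card = n →
    LinearIndependent ℂ (fun i : {x // x ∈ S} => f i.1)

namespace FullSparkAux

open Matrix Polynomial Finset
open Fin.CommRing

variable {n : ℕ} {ζ : ℂ}

/-- the character `χ z = ζ ^ z.val`. -/
noncomputable def chi (ζ : ℂ) (z : Fin n) : ℂ := ζ ^ (z : ℕ)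

lemma pow_val_mod (hζ : ζ ^ n = 1) (a : ℕ) : ζ ^ (a % n) = ζ ^ a := by
  conv_rhs => rw [← Nat.div_add_mod a n]
  rw [pow_add, pow_mul, hζ, one_pow, one_mul]

variable [NeZero n]

lemma chi_add (hζ : ζ ^ n = 1) (x y : Fin n) :
    chi ζ (x + y) = chi ζ x * chi ζ y := by
  unfold chi
  rw [Fin.val_add, pow_val_mod hζ, pow_add]

lemma chi_mul_pow (hζ : ζ ^ n = 1) (x y : Fin n) :
    chi ζ (x * y) = chi ζ x ^ (y : ℕ) := by
  unfold chi
  rw [Fin.val_mul, pow_val_mod hζ, pow_mul]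

lemma chi_pow_n (hζ : ζ ^ n = 1) (x : Fin n) : chi ζ x ^ n = 1 := by
  unfold chi
  rw [← pow_mul, mul_comm, pow_mul, hζ, one_pow]

lemma chi_ne_zero (hζ : ζ ^ n = 1) (x : Fin n) : chi ζ x ≠ 0 := by
  have : ζ ≠ 0 := by
    intro h
    rw [h, zero_pow (NeZero.ne n)] at hζ
    exact zero_ne_one hζ
  exact pow_ne_zero _ this

lemma chi_inj (hζ : IsPrimitiveRoot ζ n) : Function.Injective (chi (n := n) ζ) := by
  intro x y h
  exact Fin.ext (hζ.pow_inj x.isLt y.isLt h)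

/-- action of the shift matrix -/
lemma shift_mulVec (hn : 1 < n) (w : Fin n → ℂ) (j : Fin n) :
    (shiftMat n).mulVec w j = w (j - 1) := by
  unfold shiftMat
  simp only [Matrix.mulVec, dotProduct, Matrix.of_apply]
  have hval : ∀ k : Fin n, ((k + 1 : Fin n) : ℕ) = ((k : ℕ) + 1) % n := by
    intro k
    rw [Fin.val_add, Fin.val_one' n, Nat.mod_eq_of_lt hn]
  have hcond : ∀ k : Fin n, (((k : ℕ) + 1) % n = (j : ℕ)) ↔ k = j - 1 := by
    intro k
    rw [← hval, Fin.val_eq_val, eq_sub_iff_add_eq]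
  simp only [hcond, ite_mul, one_mul, zero_mul, Finset.sum_ite_eq', Finset.mem_univ, if_true]

/-- action of the reversal matrix -/
lemma rev_mulVec (w : Fin n → ℂ) (j : Fin n) :
    (revMat n).mulVec w j = w (-j) := by
  unfold revMat
  simp only [Matrix.mulVec, dotProduct, Matrix.of_apply]
  have hcond : ∀ k : Fin n, (((j : ℕ) + (k : ℕ)) % n = 0) ↔ k = -j := by
    intro k
    rw [← Fin.val_add]
    constructor
    · intro h
      have h0 : j + k = 0 := Fin.ext (by simpa using h)
      exact eq_neg_of_add_eq_zero_right h0
    · intro h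
      subst h
      simp
  simp only [hcond, ite_mul, one_mul, zero_mul, Finset.sum_ite_eq', Finset.mem_univ, if_true]

/-- action of powers of the shift matrix -/
lemma shift_pow_mulVec (hn : 1 < n) (a : ℕ) (w : Fin n → ℂ) (j : Fin n) :
    ((shiftMat n) ^ a).mulVec w j = w (j - (a : Fin n)) := by
  induction a generalizing w j with
  | zero => simp [Matrix.one_mulVec]
  | succ a ih =>
      rw [pow_succ, ← Matrix.mulVec_mulVec]
      rw [ih ((shiftMat n).mulVec w) j, shift_mulVec hn]
      congr 1
      push_cast
      ring


/-- determinant of a row-scaled Vandermonde matrix -/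
lemma vandDiag {m : ℕ} (c x : Fin m → ℂ) (hc : ∀ i, c i ≠ 0) (hx : Function.Injective x) :
    (Matrix.of fun i j : Fin m => c i * x i ^ (j : ℕ)).det ≠ 0 := by
  have hEq : (Matrix.of fun i j : Fin m => c i * x i ^ (j : ℕ))
      = Matrix.diagonal c * Matrix.vandermonde x := by
    ext i j
    simp [Matrix.diagonal_mul, Matrix.vandermonde]
  rw [hEq, Matrix.det_mul, Matrix.det_diagonal]
  exact mul_ne_zero (Finset.prod_ne_zero_iff.mpr fun i _ => hc i)
    (Matrix.det_vandermonde_ne_zero_iff.mpr hx)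

/-- The DFT-like matrix. -/
noncomputable def Fmat (n : ℕ) (ζ : ℂ) : Matrix (Fin n) (Fin n) ℂ :=
  Matrix.of fun j k => chi ζ (j * k)

lemma Fmat_det_ne_zero (hζ : IsPrimitiveRoot ζ n) : (Fmat n ζ).det ≠ 0 := by
  have h1 : ζ ^ n = 1 := hζ.pow_eq_one
  have hEq : Fmat n ζ = Matrix.vandermonde (chi ζ) := by
    ext j k
    simp only [Fmat, Matrix.of_apply, Matrix.vandermonde]
    exact chi_mul_pow h1 j k
  rw [hEq]
  exact Matrix.det_vandermonde_ne_zero_iff.mpr (chi_inj hζ)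

lemma orbit_eq (hn : 1 < n) (hζ1 : ζ ^ n = 1) (u : Fin n → ℂ) (p : Fin 2 × Fin n) :
    dihedralOrbit n ((Fmat n ζ).mulVec u) p
      = (Fmat n ζ).mulVec (fun k => chi ζ (-(p.2 * k)) * (if p.1 = 0 then u k else u (-k))) := by
  haveI : NeZero n := ‹_›
  funext j
  unfold dihedralOrbit
  rw [shift_pow_mulVec hn, Fin.cast_val_eq_self]
  by_cases hp : p.1 = 0
  · simp only [hp, if_true]
    simp only [Fmat, Matrix.mulVec, dotProduct, Matrix.of_apply]
    refine Finset.sum_congr rfl fun k _ => ?_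
    rw [show (j - p.2) * k = j * k + -(p.2 * k) by ring, chi_add hζ1]
    ring
  · simp only [hp, if_false]
    rw [rev_mulVec]
    rw [neg_sub]
    simp only [Fmat, Matrix.mulVec, dotProduct, Matrix.of_apply]
    rw [Fintype.sum_equiv (Equiv.neg (Fin n))
      (fun k => chi ζ (j * k) * (chi ζ (-(p.2 * k)) * u (-k)))
      (fun k => chi ζ ((p.2 - j) * k) * u k) ?_]
    intro k
    simp only [Equiv.neg_apply]
    rw [show (p.2 - j) * (-k) = j * k + -(p.2 * k) by ring, chi_add hζ1]
    ring


/-- column enumeration: first the interval `{1,…,m}`, then `{m+1,…,n}` (mod `n`). -/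
def kap (n m m' : ℕ) [NeZero n] : Fin m ⊕ Fin m' → Fin n :=
  Sum.elim (fun j => (((j : ℕ) + 1 : ℕ) : Fin n)) (fun j => ((m + 1 + (j : ℕ) : ℕ) : Fin n))

/-- exponent pattern: `0` on `{1,…,m}`, `2` on `{n-m,…,n-1}`, `1` elsewhere. -/
def eexp (n m : ℕ) (k : Fin n) : ℕ :=
  if 1 ≤ (k : ℕ) ∧ (k : ℕ) ≤ m then 0 else if n - m ≤ (k : ℕ) then 2 else 1

section ColFacts

variable {m m' : ℕ} [NeZero n]

lemma neg_val (k : Fin n) : ((-k : Fin n) : ℕ) = if (k : ℕ) = 0 then 0 else n - (k : ℕ) := by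
  have h : ((-k : Fin n) : ℕ) = (n - (k : ℕ)) % n := by rw [Fin.neg_def]
  rcases Nat.eq_zero_or_pos (k : ℕ) with h0 | h0
  · simp [h, h0]
  · have hk := k.isLt
    rw [h, Nat.mod_eq_of_lt (by omega), if_neg (by omega)]

lemma kapA_val (h2m : 2 * m < n) (j : Fin m) :
    ((kap n m m' (Sum.inl j)) : ℕ) = (j : ℕ) + 1 := by
  have hj := j.isLt
  simp only [kap, Sum.elim_inl, Fin.val_natCast]
  exact Nat.mod_eq_of_lt (by omega)

lemma kapB_val (hmm' : m + m' = n) (j : Fin m') :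
    ((kap n m m' (Sum.inr j)) : ℕ)
      = if m + 1 + (j : ℕ) = n then 0 else m + 1 + (j : ℕ) := by
  have hj := j.isLt
  simp only [kap, Sum.elim_inr, Fin.val_natCast]
  rcases eq_or_ne (m + 1 + (j : ℕ)) n with h | h
  · simp [h]
  · rw [Nat.mod_eq_of_lt (by omega), if_neg h]

lemma eexpA (h2m : 2 * m < n) (j : Fin m) :
    eexp n m (kap n m m' (Sum.inl j)) = 0 := by
  have hj := j.isLt
  rw [eexp, kapA_val h2m, if_pos (by omega)]

lemma eexpA' (h2m : 2 * m < n) (j : Fin m) :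
    eexp n m (-(kap n m m' (Sum.inl j))) = 2 := by
  have hj := j.isLt
  have hv : ((-(kap n m m' (Sum.inl j)) : Fin n) : ℕ) = n - ((j : ℕ) + 1) := by
    rw [neg_val, kapA_val h2m, if_neg (by omega)]
  rw [eexp, hv]
  split_ifs <;> omega

lemma eexpB (h2m : 2 * m < n) (hmm' : m + m' = n) (j : Fin m') :
    eexp n m (-(kap n m m' (Sum.inr j))) ≤ eexp n m (kap n m m' (Sum.inr j)) := by
  have hj := j.isLt
  have hv := kapB_val (n := n) hmm' j
  rcases eq_or_ne (m + 1 + (j : ℕ)) n with h | h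
  · rw [if_pos h] at hv
    have hnv : ((-(kap n m m' (Sum.inr j)) : Fin n) : ℕ) = 0 := by
      rw [neg_val, if_pos hv]
    rw [eexp, eexp, hv, hnv]
  · rw [if_neg h] at hv
    have hnv : ((-(kap n m m' (Sum.inr j)) : Fin n) : ℕ) = n - (m + 1 + (j : ℕ)) := by
      rw [neg_val, hv, if_neg (by omega)]
    rw [eexp, eexp, hv, hnv]
    split_ifs <;> omega

lemma kap_inj (h2m : 2 * m < n) (hmm' : m + m' = n) :
    Function.Injective (kap n m m' : Fin m ⊕ Fin m' → Fin n) := by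
  intro c c' h
  have hv := congrArg Fin.val h
  rcases c with j | j <;> rcases c' with j' | j'
  · rw [kapA_val h2m, kapA_val h2m] at hv
    exact congrArg Sum.inl (Fin.ext (by omega))
  · rw [kapA_val h2m, kapB_val hmm'] at hv
    have hj := j.isLt; have hj' := j'.isLt
    split at hv <;> omega
  · rw [kapB_val hmm', kapA_val h2m] at hv
    have hj := j.isLt; have hj' := j'.isLt
    split at hv <;> omega
  · rw [kapB_val hmm', kapB_val hmm'] at hv
    have hj := j.isLt; have hj' := j'.isLt
    refine congrArg Sum.inr (Fin.ext ?_)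
    split at hv <;> split at hv <;> omega

end ColFacts


/-- the per-column minimum exponent -/
def dmin (n m : ℕ) [NeZero n] (k : Fin n) : ℕ := min (eexp n m k) (eexp n m (-k))

lemma dmin_le_left {m : ℕ} [NeZero n] (k : Fin n) : dmin n m k ≤ eexp n m k :=
  min_le_left _ _

lemma dmin_le_right {m : ℕ} [NeZero n] (k : Fin n) : dmin n m k ≤ eexp n m (-k) :=
  min_le_right _ _

lemma eval_CXpow (a t : ℂ) (g : ℕ) :
    Polynomial.eval t (Polynomial.C a * Polynomial.X ^ g) = a * t ^ g := by simp

section Det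

variable {m m' : ℕ} [NeZero n]

lemma exists_good_t (hζ : IsPrimitiveRoot ζ n) (h2m : 2 * m < n) (hmm' : m + m' = n)
    (α : Fin m → Fin n) (hα : Function.Injective α)
    (β : Fin m' → Fin n) (hβ : Function.Injective β) :
    ∃ t : ℂ, (Matrix.of (fun r c : Fin m ⊕ Fin m' =>
      Sum.elim
        (fun i : Fin m => chi ζ (-(α i * kap n m m' c)) * t ^ eexp n m (kap n m m' c))
        (fun i : Fin m' => chi ζ (-(β i * kap n m m' c)) * t ^ eexp n m (-(kap n m m' c))) r)).det
        ≠ 0 := by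
  have hζ1 : ζ ^ n = 1 := hζ.pow_eq_one
  set Wtil : Matrix (Fin m ⊕ Fin m') (Fin m ⊕ Fin m') (Polynomial ℂ) :=
    Matrix.of (fun r c =>
      Sum.elim
        (fun i : Fin m => Polynomial.C (chi ζ (-(α i * kap n m m' c)))
            * Polynomial.X ^ (eexp n m (kap n m m' c) - dmin n m (kap n m m' c)))
        (fun i : Fin m' => Polynomial.C (chi ζ (-(β i * kap n m m' c)))
            * Polynomial.X ^ (eexp n m (-(kap n m m' c)) - dmin n m (kap n m m' c))) r) with hWtil
  set Wp : Matrix (Fin m ⊕ Fin m') (Fin m ⊕ Fin m') (Polynomial ℂ) :=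
    Matrix.of (fun r c =>
      Sum.elim
        (fun i : Fin m => Polynomial.C (chi ζ (-(α i * kap n m m' c)))
            * Polynomial.X ^ (eexp n m (kap n m m' c)))
        (fun i : Fin m' => Polynomial.C (chi ζ (-(β i * kap n m m' c)))
            * Polynomial.X ^ (eexp n m (-(kap n m m' c)))) r) with hWp
  have hfac : Wp = Wtil * Matrix.diagonal
      (fun c => (Polynomial.X : Polynomial ℂ) ^ dmin n m (kap n m m' c)) := by
    refine Matrix.ext fun r c => ?_
    rw [Matrix.mul_diagonal]
    rcases r with i | i
    · simp only [hWp, hWtil, Matrix.of_apply, Sum.elim_inl]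
      rw [mul_assoc, ← pow_add, Nat.sub_add_cancel (dmin_le_left _)]
    · simp only [hWp, hWtil, Matrix.of_apply, Sum.elim_inr]
      rw [mul_assoc, ← pow_add, Nat.sub_add_cancel (dmin_le_right _)]
  set P : Matrix (Fin m) (Fin m) ℂ :=
    Matrix.of (fun i j => chi ζ (-(α i * kap n m m' (Sum.inl j)))) with hPdef
  set R : Matrix (Fin m') (Fin m') ℂ :=
    Matrix.of (fun i j => chi ζ (-(β i * kap n m m' (Sum.inr j)))) with hRdef
  set Q : Matrix (Fin m) (Fin m') ℂ :=
    Matrix.of (fun i j => chi ζ (-(α i * kap n m m' (Sum.inr j)))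
      * (0:ℂ) ^ (eexp n m (kap n m m' (Sum.inr j)) - dmin n m (kap n m m' (Sum.inr j)))) with hQdef
  have hL : (Polynomial.evalRingHom (0:ℂ)).mapMatrix Wtil = Matrix.fromBlocks P Q 0 R := by
    ext r c
    rcases r with i | i <;> rcases c with j | j <;>
      simp only [RingHom.mapMatrix_apply, Matrix.map_apply, hWtil, Matrix.of_apply,
        Sum.elim_inl, Sum.elim_inr, Polynomial.coe_evalRingHom, eval_CXpow,
        Matrix.fromBlocks_apply₁₁, Matrix.fromBlocks_apply₁₂,
        Matrix.fromBlocks_apply₂₁, Matrix.fromBlocks_apply₂₂]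
    · rw [eexpA h2m, Nat.zero_sub, pow_zero, mul_one, hPdef]
      rfl
    · rw [hQdef]
      rfl
    · rw [eexpA' h2m, dmin, eexpA h2m, eexpA' h2m]
      norm_num
    · rw [dmin, min_eq_right (eexpB h2m hmm' j), Nat.sub_self, pow_zero, mul_one, hRdef]
      rfl
  have hdetP : P.det ≠ 0 := by
    have hPeq : P = Matrix.of (fun i j : Fin m =>
        (chi ζ (-(α i)) * chi ζ (-(α i)) ^ (0:ℕ)) * chi ζ (-(α i)) ^ (j:ℕ)) := by
      ext i j
      rw [hPdef]
      simp only [Matrix.of_apply, pow_zero, mul_one]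
      rw [show -(α i * kap n m m' (Sum.inl j)) = (-(α i)) * kap n m m' (Sum.inl j) by ring,
        chi_mul_pow hζ1, kapA_val h2m, pow_succ, mul_comm]
    rw [hPeq]
    exact vandDiag _ _ (fun i => by
        simpa using chi_ne_zero (n := n) hζ1 (-(α i)))
      (fun i i' h => hα (neg_injective (chi_inj hζ h)))
  have hdetR : R.det ≠ 0 := by
    have hReq : R = Matrix.of (fun i j : Fin m' =>
        (chi ζ (-(β i)) ^ (m + 1)) * chi ζ (-(β i)) ^ (j:ℕ)) := by
      ext i j
      rw [hRdef]
      simp only [Matrix.of_apply]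
      rw [show -(β i * kap n m m' (Sum.inr j)) = (-(β i)) * kap n m m' (Sum.inr j) by ring,
        chi_mul_pow hζ1]
      have hval : ((kap n m m' (Sum.inr j)) : ℕ) = (m + 1 + (j:ℕ)) % n := by
        rw [kap, Sum.elim_inr, Fin.val_natCast]
      rw [hval, pow_val_mod (chi_pow_n hζ1 (-(β i))), pow_add]
    rw [hReq]
    exact vandDiag _ _ (fun i => pow_ne_zero _ (chi_ne_zero hζ1 (-(β i))))
      (fun i i' h => hβ (neg_injective (chi_inj hζ h)))
  have hWtilne : Wtil.det ≠ 0 := by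
    intro h0
    have := RingHom.map_det (Polynomial.evalRingHom (0:ℂ)) Wtil
    rw [hL, Matrix.det_fromBlocks_zero₂₁, h0, map_zero] at this
    exact mul_ne_zero hdetP hdetR this.symm
  have hWpne : Wp.det ≠ 0 := by
    rw [hfac, Matrix.det_mul, Matrix.det_diagonal]
    exact mul_ne_zero hWtilne (Finset.prod_ne_zero_iff.mpr fun c _ =>
      pow_ne_zero _ Polynomial.X_ne_zero)
  obtain ⟨t, ht⟩ := Polynomial.exists_eval_ne_zero_of_natDegree_lt_card Wp.det hWpne
    (lt_of_lt_of_le (Cardinal.nat_lt_aleph0 _) (Cardinal.aleph0_le_mk ℂ))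
  refine ⟨t, ?_⟩
  have hmap : (Matrix.of (fun r c : Fin m ⊕ Fin m' =>
      Sum.elim
        (fun i : Fin m => chi ζ (-(α i * kap n m m' c)) * t ^ eexp n m (kap n m m' c))
        (fun i : Fin m' => chi ζ (-(β i * kap n m m' c)) * t ^ eexp n m (-(kap n m m' c))) r))
      = (Polynomial.evalRingHom t).mapMatrix Wp := by
    ext r c
    rcases r with i | i <;>
      simp [hWp, Polynomial.coe_evalRingHom, eval_CXpow]
  rw [hmap, ← RingHom.map_det]
  simpa using ht

end Det


lemma core (hn : 2 < n) (hζ : IsPrimitiveRoot ζ n)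
    (S : Finset (Fin 2 × Fin n)) (hS : S.card = n)
    (hm : 2 * (S.filter fun p => p.1 = 0).card < n) :
    ∃ v : Fin n → ℂ,
      LinearIndependent ℂ (fun i : {x // x ∈ S} => dihedralOrbit n v i.1) := by
  haveI : NeZero n := ⟨by omega⟩
  have hζ1 : ζ ^ n = 1 := hζ.pow_eq_one
  classical
  set SA := S.filter (fun p => p.1 = 0) with hSA
  set SB := S.filter (fun p => ¬ p.1 = 0) with hSB
  set m := SA.card with hmdef
  set m' := SB.card with hm'def
  have hcard : m + m' = n := by
    rw [hmdef, hm'def, hSA, hSB, Finset.card_filter_add_card_filter_not, hS]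
  have h2m : 2 * m < n := hm
  let eA : {x // x ∈ SA} ≃ Fin m := Finset.equivFinOfCardEq rfl
  let eB : {x // x ∈ SB} ≃ Fin m' := Finset.equivFinOfCardEq rfl
  let α : Fin m → Fin n := fun i => ((eA.symm i : Fin 2 × Fin n)).2
  let β : Fin m' → Fin n := fun i => ((eB.symm i : Fin 2 × Fin n)).2
  have hA1 : ∀ i, ((eA.symm i : Fin 2 × Fin n)).1 = 0 :=
    fun i => (Finset.mem_filter.mp (eA.symm i).2).2
  have hB1 : ∀ i, ((eB.symm i : Fin 2 × Fin n)).1 = 1 := by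
    intro i
    have h := (Finset.mem_filter.mp (eB.symm i).2).2
    have hlt : ((eB.symm i : Fin 2 × Fin n)).1.val < 2 := ((eB.symm i : Fin 2 × Fin n)).1.isLt
    have hne : ((eB.symm i : Fin 2 × Fin n)).1.val ≠ 0 := fun hh => h (Fin.ext hh)
    exact Fin.ext (by omega)
  have hAval : ∀ i, (eA.symm i : Fin 2 × Fin n) = (0, α i) :=
    fun i => Prod.ext (hA1 i) rfl
  have hBval : ∀ i, (eB.symm i : Fin 2 × Fin n) = (1, β i) :=
    fun i => Prod.ext (hB1 i) rfl
  have hα : Function.Injective α := by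
    intro i i' h
    have : eA.symm i = eA.symm i' := by
      apply Subtype.ext
      rw [hAval, hAval, h]
    exact eA.symm.injective this
  have hβ : Function.Injective β := by
    intro i i' h
    have : eB.symm i = eB.symm i' := by
      apply Subtype.ext
      rw [hBval, hBval, h]
    exact eB.symm.injective this
  obtain ⟨t, hdet⟩ := exists_good_t hζ h2m hcard α hα β hβ
  set Wt : Matrix (Fin m ⊕ Fin m') (Fin m ⊕ Fin m') ℂ :=
    Matrix.of (fun r c : Fin m ⊕ Fin m' =>
      Sum.elim
        (fun i : Fin m => chi ζ (-(α i * kap n m m' c)) * t ^ eexp n m (kap n m m' c))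
        (fun i : Fin m' => chi ζ (-(β i * kap n m m' c)) * t ^ eexp n m (-(kap n m m' c))) r)
    with hWtdef
  let u : Fin n → ℂ := fun k => t ^ eexp n m k
  let wfun : (Fin 2 × Fin n) → Fin n → ℂ :=
    fun p k => chi ζ (-(p.2 * k)) * (if p.1 = 0 then u k else u (-k))
  refine ⟨(Fmat n ζ).mulVec u, ?_⟩
  have horb : ∀ p : Fin 2 × Fin n,
      dihedralOrbit n ((Fmat n ζ).mulVec u) p = (Fmat n ζ).mulVec (wfun p) :=
    fun p => orbit_eq (by omega) hζ1 u p
  -- row bijection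
  let ρ : Fin m ⊕ Fin m' → {x // x ∈ S} := Sum.elim
      (fun i => ⟨(0, α i), by
        rw [← hAval i]; exact Finset.mem_of_mem_filter _ (eA.symm i).2⟩)
      (fun i => ⟨(1, β i), by
        rw [← hBval i]; exact Finset.mem_of_mem_filter _ (eB.symm i).2⟩)
  have hρbij : Function.Bijective ρ := by
    constructor
    · intro c c' h
      have hv := congrArg Subtype.val h
      rcases c with i | i <;> rcases c' with i' | i' <;>
        simp only [ρ, Sum.elim_inl, Sum.elim_inr, Prod.mk.injEq] at hv
      · exact congrArg Sum.inl (hα hv.2)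
      · exact absurd hv.1 (by decide)
      · exact absurd hv.1 (by decide)
      · exact congrArg Sum.inr (hβ hv.2)
    · rintro ⟨p, hp⟩
      by_cases h0 : p.1 = 0
      · have hpa : p ∈ SA := Finset.mem_filter.mpr ⟨hp, h0⟩
        refine ⟨Sum.inl (eA ⟨p, hpa⟩), ?_⟩
        apply Subtype.ext
        have h1 := hAval (eA ⟨p, hpa⟩)
        rw [Equiv.symm_apply_apply] at h1
        exact h1.symm
      · have hpb : p ∈ SB := Finset.mem_filter.mpr ⟨hp, h0⟩
        refine ⟨Sum.inr (eB ⟨p, hpb⟩), ?_⟩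
        apply Subtype.ext
        have h1 := hBval (eB ⟨p, hpb⟩)
        rw [Equiv.symm_apply_apply] at h1
        exact h1.symm
  let ρe : (Fin m ⊕ Fin m') ≃ {x // x ∈ S} := Equiv.ofBijective ρ hρbij
  let κe : (Fin m ⊕ Fin m') ≃ Fin n := Equiv.ofBijective (kap n m m') (by
    rw [Fintype.bijective_iff_injective_and_card]
    exact ⟨kap_inj h2m hcard, by simp [hcard]⟩)
  have hli0 : LinearIndependent ℂ (fun r => Wt r) :=
    Matrix.linearIndependent_rows_iff_isUnit.mpr
      ((Matrix.isUnit_iff_isUnit_det _).mpr (isUnit_iff_ne_zero.mpr hdet))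
  have hWtrow : ∀ r, Wt r = (wfun (ρ r).1) ∘ κe := by
    intro r
    funext c
    rcases r with i | i
    · simp only [hWtdef, Matrix.of_apply, Sum.elim_inl, Function.comp_apply]
      show _ = wfun (0, α i) (κe c)
      simp only [wfun, if_pos rfl]
      rfl
    · simp only [hWtdef, Matrix.of_apply, Sum.elim_inr, Function.comp_apply]
      show _ = wfun (1, β i) (κe c)
      simp only [wfun]
      rw [if_neg (by decide)]
      rfl
  have hli1 : LinearIndependent ℂ (fun r => wfun (ρ r).1) := by
    apply LinearIndependent.of_comp (LinearMap.funLeft ℂ ℂ κe)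
    have : (⇑(LinearMap.funLeft ℂ ℂ κe) ∘ fun r => wfun (ρ r).1) = fun r => Wt r := by
      funext r
      exact (hWtrow r).symm
    rw [this]
    exact hli0
  have hli2 : LinearIndependent ℂ (fun i : {x // x ∈ S} => wfun i.1) := by
    rw [← linearIndependent_equiv ρe]
    exact hli1
  have hFunit : IsUnit (Fmat n ζ) :=
    (Matrix.isUnit_iff_isUnit_det _).mpr (isUnit_iff_ne_zero.mpr (Fmat_det_ne_zero hζ))
  have hinj : Function.Injective ((Fmat n ζ).mulVecLin) := by
    have := Matrix.mulVec_injective_iff_isUnit.mpr hFunit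
    simpa [Matrix.coe_mulVecLin] using this
  have hfinal := hli2.map' ((Fmat n ζ).mulVecLin) (LinearMap.ker_eq_bot.mpr hinj)
  have : (⇑((Fmat n ζ).mulVecLin) ∘ fun i : {x // x ∈ S} => wfun i.1)
      = fun i : {x // x ∈ S} => dihedralOrbit n ((Fmat n ζ).mulVec u) i.1 := by
    funext i
    rw [horb]
    simp [Matrix.mulVecLin_apply]
  rwa [this] at hfinal


lemma rev_rev (w : Fin n → ℂ) [NeZero n] :
    (revMat n).mulVec ((revMat n).mulVec w) = w := by
  funext j
  rw [rev_mulVec, rev_mulVec, neg_neg]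

lemma orbit_flip [NeZero n] (v : Fin n → ℂ) (p : Fin 2 × Fin n) :
    dihedralOrbit n ((revMat n).mulVec v) p = dihedralOrbit n v (p.1 + 1, p.2) := by
  have h2 : ∀ x : Fin 2, x = 0 ∨ x = 1 := by decide
  unfold dihedralOrbit
  rcases h2 p.1 with h | h
  · have e1 : (if p.1 = 0 then (revMat n).mulVec v
        else (revMat n).mulVec ((revMat n).mulVec v)) = (revMat n).mulVec v := if_pos h
    have e2 : (if ((p.1 + 1, p.2) : Fin 2 × Fin n).1 = 0 then v else (revMat n).mulVec v)
        = (revMat n).mulVec v := by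
      have hfst : ((p.1 + 1, p.2) : Fin 2 × Fin n).1 = p.1 + 1 := rfl
      rw [hfst, h]
      exact if_neg (by decide)
    rw [e1, e2]
  · have e1 : (if p.1 = 0 then (revMat n).mulVec v
        else (revMat n).mulVec ((revMat n).mulVec v)) = v := by
      rw [if_neg (by rw [h]; decide), rev_rev]
    have e2 : (if ((p.1 + 1, p.2) : Fin 2 × Fin n).1 = 0 then v else (revMat n).mulVec v)
        = v := by
      have hfst : ((p.1 + 1, p.2) : Fin 2 × Fin n).1 = p.1 + 1 := rfl
      rw [hfst, h]
      exact if_pos (by decide)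
    rw [e1, e2]

lemma key (hn : 2 < n) (hodd : Odd n) (hζ : IsPrimitiveRoot ζ n)
    (S : Finset (Fin 2 × Fin n)) (hS : S.card = n) :
    ∃ v : Fin n → ℂ,
      LinearIndependent ℂ (fun i : {x // x ∈ S} => dihedralOrbit n v i.1) := by
  haveI : NeZero n := ⟨by omega⟩
  classical
  by_cases hm : 2 * (S.filter fun p => p.1 = 0).card < n
  · exact core hn hζ S hS hm
  · set φ : Fin 2 × Fin n ≃ Fin 2 × Fin n :=
      Equiv.prodCongr (Equiv.addRight (1 : Fin 2)) (Equiv.refl (Fin n)) with hφ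
    have hφval : ∀ p : Fin 2 × Fin n, φ p = (p.1 + 1, p.2) := fun p => rfl
    set S' := S.image φ with hS'
    have hS'card : S'.card = n := by
      rw [hS', Finset.card_image_of_injective _ φ.injective, hS]
    have hfilter : (S'.filter fun p => p.1 = 0)
        = (S.filter fun p => ¬ p.1 = 0).image φ := by
      rw [hS', Finset.filter_image]
      congr 1
      apply Finset.filter_congr
      intro p _
      have : ∀ x : Fin 2, (x + 1 = 0) ↔ ¬ (x = 0) := by decide
      simpa [hφval] using this p.1
    have hmm : 2 * (S'.filter fun p => p.1 = 0).card < n := by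
      have hsplit : (S.filter fun p => p.1 = 0).card
          + (S.filter fun p => ¬ p.1 = 0).card = n := by
        rw [Finset.card_filter_add_card_filter_not, hS]
      have hodd2 : 2 * (S.filter fun p => p.1 = 0).card ≠ n := by
        rcases hodd with ⟨r, hr⟩
        omega
      rw [hfilter, Finset.card_image_of_injective _ φ.injective]
      omega
    obtain ⟨v', hv'⟩ := core hn hζ S' hS'card hmm
    refine ⟨(revMat n).mulVec v', ?_⟩
    have hmem : ∀ a : Fin 2 × Fin n, a ∈ S ↔ φ a ∈ S' := by
      intro a
      rw [hS', Finset.mem_image]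
      constructor
      · intro h; exact ⟨a, h, rfl⟩
      · rintro ⟨b, hb, he⟩
        rwa [← φ.injective he]
    let ψ : {x // x ∈ S} ≃ {x // x ∈ S'} := Equiv.subtypeEquiv φ hmem
    have hcomp : (fun i : {x // x ∈ S'} => dihedralOrbit n v' i.1) ∘ ψ
        = fun i : {x // x ∈ S} => dihedralOrbit n ((revMat n).mulVec v') i.1 := by
      funext i
      show dihedralOrbit n v' (φ i.1) = _
      rw [orbit_flip]
      rfl
    exact (linearIndependent_equiv' ψ hcomp).mpr hv'


/-- matrix of the group element acting on `v` -/
noncomputable def G (n : ℕ) (p : Fin 2 × Fin n) : Matrix (Fin n) (Fin n) ℂ :=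
  (shiftMat n) ^ (p.2 : ℕ) * (if p.1 = 0 then 1 else revMat n)

lemma orbit_G (v : Fin n → ℂ) (p : Fin 2 × Fin n) :
    dihedralOrbit n v p = (G n p).mulVec v := by
  unfold dihedralOrbit G
  rw [← Matrix.mulVec_mulVec]
  congr 1
  by_cases h : p.1 = 0
  · rw [if_pos h, if_pos h, Matrix.one_mulVec]
  · rw [if_neg h, if_neg h]

/-- the determinant polynomial attached to a subset `S` of cardinality `n` -/
noncomputable def PS (n : ℕ) (S : Finset (Fin 2 × Fin n)) (hS : S.card = n) :
    MvPolynomial (Fin n) ℂ :=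
  (Matrix.of fun r c : Fin n =>
    ∑ k : Fin n, MvPolynomial.C
      ((G n (((Finset.equivFinOfCardEq hS).symm r : {x // x ∈ S}) : Fin 2 × Fin n)) c k)
      * MvPolynomial.X k).det

lemma eval_PS (S : Finset (Fin 2 × Fin n)) (hS : S.card = n) (v : Fin n → ℂ) :
    MvPolynomial.eval v (PS n S hS)
      = (Matrix.of fun r c : Fin n =>
          dihedralOrbit n v (((Finset.equivFinOfCardEq hS).symm r : {x // x ∈ S}) : Fin 2 × Fin n) c).det := by
  rw [PS, RingHom.map_det]
  congr 1
  refine Matrix.ext fun r c => ?_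
  simp only [RingHom.mapMatrix_apply, Matrix.map_apply, Matrix.of_apply, map_sum,
    _root_.map_mul, MvPolynomial.eval_C, MvPolynomial.eval_X]
  rw [orbit_G]
  simp [Matrix.mulVec, dotProduct]

lemma det_PS_ne_zero (S : Finset (Fin 2 × Fin n)) (hS : S.card = n) (v : Fin n → ℂ)
    (hv : LinearIndependent ℂ (fun i : {x // x ∈ S} => dihedralOrbit n v i.1)) :
    MvPolynomial.eval v (PS n S hS) ≠ 0 := by
  rw [eval_PS]
  have hrows : LinearIndependent ℂ (fun r : Fin n =>
      (Matrix.of fun r c : Fin n =>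
        dihedralOrbit n v (((Finset.equivFinOfCardEq hS).symm r : {x // x ∈ S}) : Fin 2 × Fin n) c) r) :=
    (linearIndependent_equiv' (R := ℂ) (Finset.equivFinOfCardEq hS).symm
      (f := fun i : {x // x ∈ S} => dihedralOrbit n v i.1)
      (g := fun r : Fin n =>
        (Matrix.of fun r c : Fin n =>
          dihedralOrbit n v (((Finset.equivFinOfCardEq hS).symm r : {x // x ∈ S}) : Fin 2 × Fin n) c) r)
      rfl).mpr hv
  have hunit := Matrix.linearIndependent_rows_iff_isUnit.mp hrows
  exact isUnit_iff_ne_zero.mp ((Matrix.isUnit_iff_isUnit_det _).mp hunit)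

lemma li_of_det_PS_ne_zero (S : Finset (Fin 2 × Fin n)) (hS : S.card = n) (v : Fin n → ℂ)
    (h : MvPolynomial.eval v (PS n S hS) ≠ 0) :
    LinearIndependent ℂ (fun i : {x // x ∈ S} => dihedralOrbit n v i.1) := by
  rw [eval_PS] at h
  have hunit : IsUnit (Matrix.of fun r c : Fin n =>
      dihedralOrbit n v (((Finset.equivFinOfCardEq hS).symm r : {x // x ∈ S}) : Fin 2 × Fin n) c) :=
    (Matrix.isUnit_iff_isUnit_det _).mpr (isUnit_iff_ne_zero.mpr h)
  have hrows := Matrix.linearIndependent_rows_iff_isUnit.mpr hunit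
  exact (linearIndependent_equiv' (R := ℂ) (Finset.equivFinOfCardEq hS).symm
      (f := fun i : {x // x ∈ S} => dihedralOrbit n v i.1)
      (g := fun r : Fin n =>
        (Matrix.of fun r c : Fin n =>
          dihedralOrbit n v (((Finset.equivFinOfCardEq hS).symm r : {x // x ∈ S}) : Fin 2 × Fin n) c) r)
      rfl).mp hrows

end FullSparkAux

theorem exists_nonzero_polynomial_dihedral_full_spark
    (n : ℕ) (hn : 2 < n) (hodd : Odd n) :
    ∃ p : MvPolynomial (Fin n) ℂ, p ≠ 0 ∧
      ∀ v : Fin n → ℂ, MvPolynomial.eval v p ≠ 0 →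
        IsFullSpark n (dihedralOrbit n v) := by
  classical
  haveI : NeZero n := ⟨by omega⟩
  have hζ : IsPrimitiveRoot (Complex.exp (2 * Real.pi * Complex.I / n)) n :=
    Complex.isPrimitiveRoot_exp n (by omega)
  refine ⟨∏ x ∈ (Finset.powersetCard n (Finset.univ : Finset (Fin 2 × Fin n))).attach,
      FullSparkAux.PS n x.1 (Finset.mem_powersetCard_univ.mp x.2), ?_, ?_⟩
  · rw [Finset.prod_ne_zero_iff]
    intro x _
    obtain ⟨v, hv⟩ := FullSparkAux.key hn hodd hζ x.1 (Finset.mem_powersetCard_univ.mp x.2)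
    intro h0
    have := FullSparkAux.det_PS_ne_zero x.1 (Finset.mem_powersetCard_univ.mp x.2) v hv
    rw [h0, map_zero] at this
    exact this rfl
  · intro v hv S hScard
    have hmem : S ∈ Finset.powersetCard n (Finset.univ : Finset (Fin 2 × Fin n)) :=
      Finset.mem_powersetCard_univ.mpr hScard
    have hfac : MvPolynomial.eval v (FullSparkAux.PS n S hScard) ≠ 0 := by
      intro h0
      apply hv
      rw [map_prod]
      refine Finset.prod_eq_zero (Finset.mem_attach _ ⟨S, hmem⟩) ?_
      rw [show FullSparkAux.PS n S (Finset.mem_powersetCard_univ.mp hmem)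
          = FullSparkAux.PS n S hScard from rfl, h0]
    exact FullSparkAux.li_of_det_PS_ne_zero S hScard v hfac
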